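/- Let u, v ∈ R^N with v_i > 0 and u_i ≥ 0 for all i, let κ_v = max_i ||v||/v_i, let ᾱ_k > 0, and let y_1,...,y_N ∈ R^d, g ∈ R^d. Suppose for each i that α_i satisfies |α_i - ᾱ_i|·||y_i|| ≤ ᾱ_i ||y_i - v_i g|| and ᾱ_k ≤ ᾱ_i ≤ (||v||/v_i)ᾱ_k. Then ∑_{i=1}^N ||α_i y_i||² ≤ 6κ_v² ᾱ_k² ∑_{i=1}^N ||y_i - v_i g||² + 3N ᾱ_k² ||v||² ||g||². -/
import Mathlib


/-- Bound on the total squared magnitude of the stacked clipped directions. -/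
theorem stmt_13 {N d : ℕ} [NeZero N]
    (u v : EuclideanSpace ℝ (Fin N))
    (hu : ∀ i, 0 ≤ u i) (hv : ∀ i, 0 < v i)
    (κv : ℝ) (hκ : κv = Finset.univ.sup' Finset.univ_nonempty (fun i => ‖v‖ / v i))
    (ᾱk : ℝ) (hᾱk : 0 < ᾱk)
    (y : Fin N → EuclideanSpace ℝ (Fin d)) (g : EuclideanSpace ℝ (Fin d))
    (α ᾱ : Fin N → ℝ)
    (hdev : ∀ i, |α i - ᾱ i| * ‖y i‖ ≤ ᾱ i * ‖y i - v i • g‖)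
    (hlow : ∀ i, ᾱk ≤ ᾱ i) (hhigh : ∀ i, ᾱ i ≤ (‖v‖ / v i) * ᾱk) :
    ∑ i, ‖α i • y i‖ ^ 2 ≤
      6 * κv ^ 2 * ᾱk ^ 2 * ∑ i, ‖y i - v i • g‖ ^ 2 +
        3 * (N : ℝ) * ᾱk ^ 2 * ‖v‖ ^ 2 * ‖g‖ ^ 2 := by
  have key : ∀ i, ‖α i • y i‖ ^ 2 ≤
      6 * κv ^ 2 * ᾱk ^ 2 * ‖y i - v i • g‖ ^ 2 + 3 * ᾱk ^ 2 * ‖v‖ ^ 2 * ‖g‖ ^ 2 := by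
    intro i
    have hvi := hv i
    have hᾱi : 0 < ᾱ i := lt_of_lt_of_le hᾱk (hlow i)
    -- ᾱ i ≤ κv * ᾱk
    have hsup : ‖v‖ / v i ≤ κv := by
      rw [hκ]; exact Finset.le_sup' (fun j => ‖v‖ / v j) (Finset.mem_univ i)
    have h1 : ᾱ i ≤ κv * ᾱk :=
      (hhigh i).trans (mul_le_mul_of_nonneg_right hsup hᾱk.le)
    -- ᾱ i * v i ≤ ‖v‖ * ᾱk
    have h2 : ᾱ i * v i ≤ ‖v‖ * ᾱk := by
      have := mul_le_mul_of_nonneg_right (hhigh i) hvi.le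
      calc ᾱ i * v i ≤ (‖v‖ / v i) * ᾱk * v i := this
        _ = ‖v‖ * ᾱk := by field_simp
    -- decomposition
    have hdecomp : α i • y i
        = (α i - ᾱ i) • y i + ᾱ i • (y i - v i • g) + (ᾱ i * v i) • g := by
      rw [mul_smul]; module
    have hn : ‖α i • y i‖ ≤ |α i - ᾱ i| * ‖y i‖ + ᾱ i * ‖y i - v i • g‖
        + (ᾱ i * v i) * ‖g‖ := by
      rw [hdecomp]
      calc ‖(α i - ᾱ i) • y i + ᾱ i • (y i - v i • g) + (ᾱ i * v i) • g‖
          ≤ ‖(α i - ᾱ i) • y i + ᾱ i • (y i - v i • g)‖ + ‖(ᾱ i * v i) • g‖ :=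
            norm_add_le _ _
        _ ≤ ‖(α i - ᾱ i) • y i‖ + ‖ᾱ i • (y i - v i • g)‖ + ‖(ᾱ i * v i) • g‖ := by
            gcongr; exact norm_add_le _ _
        _ = |α i - ᾱ i| * ‖y i‖ + ᾱ i * ‖y i - v i • g‖ + (ᾱ i * v i) * ‖g‖ := by
            rw [norm_smul, norm_smul, norm_smul, Real.norm_eq_abs, Real.norm_eq_abs,
              Real.norm_eq_abs, abs_of_pos hᾱi, abs_of_pos (mul_pos hᾱi hvi)]
    -- so ‖α i • y i‖ ≤ 2 * (κv*ᾱk) * ‖y i - v i • g‖ + ‖v‖*ᾱk*‖g‖, then square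
    have hA : |α i - ᾱ i| * ‖y i‖ ≤ κv * ᾱk * ‖y i - v i • g‖ :=
      (hdev i).trans (mul_le_mul_of_nonneg_right h1 (norm_nonneg _))
    have hB : ᾱ i * ‖y i - v i • g‖ ≤ κv * ᾱk * ‖y i - v i • g‖ :=
      mul_le_mul_of_nonneg_right h1 (norm_nonneg _)
    have hC : (ᾱ i * v i) * ‖g‖ ≤ ‖v‖ * ᾱk * ‖g‖ :=
      mul_le_mul_of_nonneg_right h2 (norm_nonneg _)
    have hnn : (0:ℝ) ≤ ‖α i • y i‖ := norm_nonneg _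
    nlinarith [sq_nonneg (|α i - ᾱ i| * ‖y i‖ - ᾱ i * ‖y i - v i • g‖),
      sq_nonneg (|α i - ᾱ i| * ‖y i‖ - (ᾱ i * v i) * ‖g‖),
      sq_nonneg (ᾱ i * ‖y i - v i • g‖ - (ᾱ i * v i) * ‖g‖),
      sq_nonneg (κv * ᾱk * ‖y i - v i • g‖ - ᾱ i * ‖y i - v i • g‖),
      mul_self_nonneg (‖y i - v i • g‖), norm_nonneg (y i - v i • g), norm_nonneg g,
      mul_nonneg (abs_nonneg (α i - ᾱ i)) (norm_nonneg (y i)),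
      mul_nonneg (mul_nonneg hᾱi.le hvi.le) (norm_nonneg g),
      mul_nonneg hᾱi.le (norm_nonneg (y i - v i • g)), hA, hB, hC, hn, hnn,
      sq_nonneg (‖α i • y i‖)]
  calc ∑ i, ‖α i • y i‖ ^ 2
      ≤ ∑ i, (6 * κv ^ 2 * ᾱk ^ 2 * ‖y i - v i • g‖ ^ 2
          + 3 * ᾱk ^ 2 * ‖v‖ ^ 2 * ‖g‖ ^ 2) :=
        Finset.sum_le_sum fun i _ => key i
    _ = 6 * κv ^ 2 * ᾱk ^ 2 * ∑ i, ‖y i - v i • g‖ ^ 2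
        + 3 * (N : ℝ) * ᾱk ^ 2 * ‖v‖ ^ 2 * ‖g‖ ^ 2 := by
        rw [Finset.sum_add_distrib, ← Finset.mul_sum, Finset.sum_const,
          Finset.card_univ, Fintype.card_fin, nsmul_eq_mul]
        ring
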